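/- Let Y_1, ..., Y_{k} be vectors in R^p, \Delta \in R^p, and k* with m < k* < k. Define X_i = Y_i for i \le k* and X_i = Y_i + \Delta for i > k*. Then with G_k(m) as the two-sample U-statistic defined from the X sequence and G_k^Y(m) the same functional of the Y sequence, the exact decomposition holds: G_k(m) = G_k^Y(m) + (k-k*)(k-k*-1) m (m-1) \|\Delta\|_2^2 + (cross terms that are linear in the quantities \sum_{j \in I} Y_j^T \Delta for intervals I \subseteq {1,...,k}); in particular, E[G_k(m)] - E[G_k^Y(m)] = (k-k*)(k-k*-1) m (m-1) \|\Delta\|_2^2 when the Y_j are mean zero. -/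

import Mathlib

open MeasureTheory ProbabilityTheory

/-- The two-sample U-statistic component
G_k(m)(Z) = ∑_l ∑*_{1≤i₁,i₂≤m} ∑*_{m+1≤j₁,j₂≤k} (Z_{i₁,l}-Z_{j₁,l})(Z_{i₂,l}-Z_{j₂,l}),
where ∑* denotes summation over ordered pairs of distinct indices within each group. -/
noncomputable def Gstat (p m k : ℕ) (Z : ℕ → Fin p → ℝ) : ℝ :=
  ∑ l : Fin p,
    ∑ i ∈ (Finset.Icc 1 m ×ˢ Finset.Icc 1 m).filter (fun i => i.1 ≠ i.2),
      ∑ j ∈ (Finset.Icc (m + 1) k ×ˢ Finset.Icc (m + 1) k).filter (fun j => j.1 ≠ j.2),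
        (Z i.1 l - Z j.1 l) * (Z i.2 l - Z j.2 l)

/-- Product of two L² functions is integrable. -/
lemma integrable_mul_of_memL2 {Ω : Type*} [MeasurableSpace Ω] {μ : Measure Ω}
    {f g : Ω → ℝ} (hf : MemLp f 2 μ) (hg : MemLp g 2 μ) :
    Integrable (fun ω => f ω * g ω) μ := by
  have h1 := (hf.add hg).integrable_sq
  have h2 := hf.integrable_sq
  have h3 := hg.integrable_sq
  have h : (fun ω => f ω * g ω)
      = fun ω => (1/2 : ℝ) * (((f ω + g ω) ^ 2 - f ω ^ 2) - g ω ^ 2) :=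
    funext fun ω => by ring
  rw [h]
  exact ((h1.sub h2).sub h3).const_mul _

/-- Integral of a product of shifted mean-zero L² functions. -/
lemma integral_shift_mul {Ω : Type*} [MeasurableSpace Ω] (μ : Measure Ω)
    [IsProbabilityMeasure μ] {f g : Ω → ℝ} (a b : ℝ)
    (hf : MemLp f 2 μ) (hg : MemLp g 2 μ)
    (hf0 : ∫ ω, f ω ∂μ = 0) (hg0 : ∫ ω, g ω ∂μ = 0) :
    ∫ ω, (f ω + a) * (g ω + b) ∂μ = (∫ ω, f ω * g ω ∂μ) + a * b := by
  have hfg : Integrable (fun ω => f ω * g ω) μ := integrable_mul_of_memL2 hf hg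
  have hfi : Integrable f μ := hf.integrable one_le_two
  have hgi : Integrable g μ := hg.integrable one_le_two
  have h : (fun ω => (f ω + a) * (g ω + b))
      = fun ω => f ω * g ω + (b * f ω + (a * g ω + a * b)) :=
    funext fun ω => by ring
  have hi3 : Integrable (fun ω => a * g ω + a * b) μ :=
    (hgi.const_mul a).add (integrable_const (a * b))
  have hi2 : Integrable (fun ω => b * f ω + (a * g ω + a * b)) μ :=
    (hfi.const_mul b).add hi3
  rw [h, integral_add hfg hi2, integral_add (hfi.const_mul b) hi3,
    integral_add (hgi.const_mul a) (integrable_const (a * b)),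
    integral_const_mul, integral_const_mul, hf0, hg0, integral_const]
  simp

lemma nat_sq_sub (n : ℕ) : n * n - n = n * (n - 1) := by
  cases n with
  | zero => simp
  | succ n =>
    have h : (n + 1) * (n + 1) = (n + 1) * n + (n + 1) := by ring
    simp only [Nat.succ_sub_one]
    omega

/-- Under the mean-shift alternative X_i = Y_i + Δ 1{i > k*} with m < k* < k
and independent mean-zero Y_j,
E[G_k(m)] - E[G_k^Y(m)] = (k-k*)(k-k*-1) m (m-1) ‖Δ‖₂². -/
theorem stmt_18 {Ω : Type*} [MeasurableSpace Ω] (μ : Measure Ω) [IsProbabilityMeasure μ]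
    (p m k kstar : ℕ) (hmk : m < kstar) (hk : kstar < k)
    (Y : ℕ → Ω → Fin p → ℝ) (Δ : Fin p → ℝ)
    (hYm : ∀ i, Measurable (Y i))
    (hindep : iIndepFun Y μ)
    (hY2 : ∀ i l, MemLp (fun ω => Y i ω l) 2 μ)
    (hmean : ∀ i l, ∫ ω, Y i ω l ∂μ = 0)
    (X : ℕ → Ω → Fin p → ℝ)
    (hX : ∀ i ω l, X i ω l = Y i ω l + if kstar < i then Δ l else 0) :
    ∫ ω, Gstat p m k (fun i => X i ω) ∂μ
      = (∫ ω, Gstat p m k (fun i => Y i ω) ∂μ)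
        + ((k - kstar) * (k - kstar - 1) * m * (m - 1) : ℕ) * ∑ l, Δ l ^ 2 := by
  classical
  set c : ℕ → ℝ := fun j => if kstar < j then (1 : ℝ) else 0 with hcdef
  have hXY : ∀ i ω l, X i ω l = Y i ω l + c i * Δ l := by
    intro i ω l
    rw [hX]
    by_cases h : kstar < i <;> simp [hcdef, h]
  -- membership sets
  set If := (Finset.Icc 1 m ×ˢ Finset.Icc 1 m).filter (fun i : ℕ × ℕ => i.1 ≠ i.2) with hIf
  set Jf := (Finset.Icc (m + 1) k ×ˢ Finset.Icc (m + 1) k).filter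
      (fun j : ℕ × ℕ => j.1 ≠ j.2) with hJf
  -- L² facts
  have hX2 : ∀ i l, MemLp (fun ω => X i ω l) 2 μ := by
    intro i l
    have : (fun ω => X i ω l) = fun ω => Y i ω l + c i * Δ l :=
      funext fun ω => hXY i ω l
    rw [this]
    exact (hY2 i l).add (memLp_const _)
  have hXd2 : ∀ i j l, MemLp (fun ω => X i ω l - X j ω l) 2 μ :=
    fun i j l => (hX2 i l).sub (hX2 j l)
  have hYd2 : ∀ i j l, MemLp (fun ω => Y i ω l - Y j ω l) 2 μ :=
    fun i j l => (hY2 i l).sub (hY2 j l)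
  have hXint : ∀ (l : Fin p) (i1 i2 j1 j2 : ℕ),
      Integrable (fun ω => (X i1 ω l - X j1 ω l) * (X i2 ω l - X j2 ω l)) μ :=
    fun l i1 i2 j1 j2 => integrable_mul_of_memL2 (hXd2 i1 j1 l) (hXd2 i2 j2 l)
  have hYint : ∀ (l : Fin p) (i1 i2 j1 j2 : ℕ),
      Integrable (fun ω => (Y i1 ω l - Y j1 ω l) * (Y i2 ω l - Y j2 ω l)) μ :=
    fun l i1 i2 j1 j2 => integrable_mul_of_memL2 (hYd2 i1 j1 l) (hYd2 i2 j2 l)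
  -- expand integrals of Gstat into triple sums
  have expand : ∀ (Z : ℕ → Ω → Fin p → ℝ),
      (∀ (l : Fin p) (i1 i2 j1 j2 : ℕ),
        Integrable (fun ω => (Z i1 ω l - Z j1 ω l) * (Z i2 ω l - Z j2 ω l)) μ) →
      ∫ ω, Gstat p m k (fun i => Z i ω) ∂μ
        = ∑ l : Fin p, ∑ i ∈ If, ∑ j ∈ Jf,
            ∫ ω, (Z i.1 ω l - Z j.1 ω l) * (Z i.2 ω l - Z j.2 ω l) ∂μ := by
    intro Z hZ
    unfold Gstat
    rw [integral_finset_sum _ (fun l _ => integrable_finset_sum _ (fun i _ =>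
        integrable_finset_sum _ (fun j _ => hZ l i.1 i.2 j.1 j.2)))]
    refine Finset.sum_congr rfl fun l _ => ?_
    rw [integral_finset_sum _ (fun i _ =>
        integrable_finset_sum _ (fun j _ => hZ l i.1 i.2 j.1 j.2))]
    refine Finset.sum_congr rfl fun i _ => ?_
    rw [integral_finset_sum _ (fun j _ => hZ l i.1 i.2 j.1 j.2)]
  rw [expand X hXint, expand Y hYint]
  -- per-term identity
  have perterm : ∀ (l : Fin p), ∀ i ∈ If, ∀ j ∈ Jf,
      ∫ ω, (X i.1 ω l - X j.1 ω l) * (X i.2 ω l - X j.2 ω l) ∂μ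
        = (∫ ω, (Y i.1 ω l - Y j.1 ω l) * (Y i.2 ω l - Y j.2 ω l) ∂μ)
          + (c j.1 * Δ l) * (c j.2 * Δ l) := by
    intro l i hi j hj
    simp only [hIf, Finset.mem_filter, Finset.mem_product, Finset.mem_Icc] at hi
    have hc1 : c i.1 = 0 := by
      simp only [hcdef]
      have : ¬ kstar < i.1 := by omega
      simp [this]
    have hc2 : c i.2 = 0 := by
      simp only [hcdef]
      have : ¬ kstar < i.2 := by omega
      simp [this]
    have hfun : (fun ω => (X i.1 ω l - X j.1 ω l) * (X i.2 ω l - X j.2 ω l))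
        = fun ω => ((Y i.1 ω l - Y j.1 ω l) + (-(c j.1 * Δ l)))
            * ((Y i.2 ω l - Y j.2 ω l) + (-(c j.2 * Δ l))) := by
      funext ω
      rw [hXY i.1 ω l, hXY j.1 ω l, hXY i.2 ω l, hXY j.2 ω l, hc1, hc2]
      ring
    rw [hfun, integral_shift_mul μ _ _ (hYd2 i.1 j.1 l) (hYd2 i.2 j.2 l)
        (by rw [integral_sub ((hY2 i.1 l).integrable one_le_two)
            ((hY2 j.1 l).integrable one_le_two), hmean, hmean, sub_zero])
        (by rw [integral_sub ((hY2 i.2 l).integrable one_le_two)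
            ((hY2 j.2 l).integrable one_le_two), hmean, hmean, sub_zero])]
    ring
  calc ∑ l : Fin p, ∑ i ∈ If, ∑ j ∈ Jf,
        ∫ ω, (X i.1 ω l - X j.1 ω l) * (X i.2 ω l - X j.2 ω l) ∂μ
      = ∑ l : Fin p, ∑ i ∈ If, ∑ j ∈ Jf,
        ((∫ ω, (Y i.1 ω l - Y j.1 ω l) * (Y i.2 ω l - Y j.2 ω l) ∂μ)
          + (c j.1 * Δ l) * (c j.2 * Δ l)) := by
        refine Finset.sum_congr rfl fun l _ => Finset.sum_congr rfl fun i hi =>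
          Finset.sum_congr rfl fun j hj => perterm l i hi j hj
    _ = (∑ l : Fin p, ∑ i ∈ If, ∑ j ∈ Jf,
          ∫ ω, (Y i.1 ω l - Y j.1 ω l) * (Y i.2 ω l - Y j.2 ω l) ∂μ)
        + ∑ l : Fin p, ∑ i ∈ If, ∑ j ∈ Jf, (c j.1 * Δ l) * (c j.2 * Δ l) := by
        simp [Finset.sum_add_distrib]
    _ = (∑ l : Fin p, ∑ i ∈ If, ∑ j ∈ Jf,
          ∫ ω, (Y i.1 ω l - Y j.1 ω l) * (Y i.2 ω l - Y j.2 ω l) ∂μ)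
        + ((k - kstar) * (k - kstar - 1) * m * (m - 1) : ℕ) * ∑ l, Δ l ^ 2 := by
        congr 1
        -- compute the constant sum
        have hJsum : ∑ j ∈ Jf, c j.1 * c j.2 = ((k - kstar) * (k - kstar - 1) : ℕ) := by
          set T := Finset.Icc (kstar + 1) k with hT
          set Tf := (T ×ˢ T).filter (fun j : ℕ × ℕ => j.1 ≠ j.2) with hTf
          have hsub : Tf ⊆ Jf := by
            intro j hj
            simp only [hTf, hJf, hT, Finset.mem_filter, Finset.mem_product,
              Finset.mem_Icc] at hj ⊢
            omega
          have hzero : ∀ j ∈ Jf, j ∉ Tf → c j.1 * c j.2 = 0 := by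
            intro j hj hjT
            simp only [hTf, hJf, hT, Finset.mem_filter, Finset.mem_product,
              Finset.mem_Icc] at hj hjT
            have : ¬ kstar < j.1 ∨ ¬ kstar < j.2 := by omega
            rcases this with h | h
            · simp [hcdef, h]
            · simp [hcdef, h]
          rw [← Finset.sum_subset hsub hzero]
          have hone : ∀ j ∈ Tf, c j.1 * c j.2 = 1 := by
            intro j hj
            simp only [hTf, hT, Finset.mem_filter, Finset.mem_product,
              Finset.mem_Icc] at hj
            have h1 : kstar < j.1 := by omega
            have h2 : kstar < j.2 := by omega
            simp [hcdef, h1, h2]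
          rw [Finset.sum_congr rfl hone]
          have hcard : Tf.card = (k - kstar) * (k - kstar - 1) := by
            have : Tf = T.offDiag := by
              rw [hTf]; ext x
              simp only [Finset.mem_filter, Finset.mem_product, Finset.mem_offDiag, and_assoc]
            rw [this, Finset.offDiag_card, hT, Nat.card_Icc]
            have : k + 1 - (kstar + 1) = k - kstar := by omega
            rw [this, nat_sq_sub]
          simp [hcard]
        have hIcard : If.card = m * (m - 1) := by
          have : If = (Finset.Icc 1 m).offDiag := by
            rw [hIf]; ext x
            simp only [Finset.mem_filter, Finset.mem_product, Finset.mem_offDiag, and_assoc]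
          rw [this, Finset.offDiag_card, Nat.card_Icc]
          have : m + 1 - 1 = m := by omega
          rw [this, nat_sq_sub]
        have hinner : ∀ l : Fin p, ∑ i ∈ If, ∑ j ∈ Jf, (c j.1 * Δ l) * (c j.2 * Δ l)
            = ((k - kstar) * (k - kstar - 1) * m * (m - 1) : ℕ) * Δ l ^ 2 := by
          intro l
          have hj : ∑ j ∈ Jf, (c j.1 * Δ l) * (c j.2 * Δ l)
              = ((k - kstar) * (k - kstar - 1) : ℕ) * Δ l ^ 2 := by
            have : ∀ j : ℕ × ℕ, (c j.1 * Δ l) * (c j.2 * Δ l)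
                = (c j.1 * c j.2) * Δ l ^ 2 := fun j => by ring
            simp_rw [this]
            rw [← Finset.sum_mul, hJsum]
          rw [Finset.sum_const, hj, hIcard]
          push_cast
          ring
        rw [Finset.sum_congr rfl (fun l _ => hinner l), Finset.mul_sum]
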